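/- The set of reward vectors r for which the one-step value deviation matrix ρ_r^π is identically zero (i.e., ρ_r^π(s,s') = 0 for all s, s') is exactly the set of constant vectors {α·𝟏 : α ∈ ℝ}. -/
import Mathlib

open Matrix

/-- The one-step value deviation matrix `ρ_r^π` vanishes identically
iff the reward vector `r` is constant. -/
theorem deviation_matrix_zero_iff_constant_reward
    {S : Type*} [Fintype S] [DecidableEq S] [Nonempty S]
    (P : Matrix S S ℝ) (γ : ℝ) (hγ : γ ∈ Set.Ioo (0:ℝ) 1)
    (hPnn : ∀ s s', 0 ≤ P s s') (hPsum : ∀ s, ∑ s', P s s' = 1)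
    (r : S → ℝ) :
    (∀ s s' : S,
        ((1 - γ • P)⁻¹ *ᵥ r) s' - (P *ᵥ ((1 - γ • P)⁻¹ *ᵥ r)) s = 0)
      ↔ ∃ α : ℝ, r = fun _ => α := by
  obtain ⟨hγ0, hγ1⟩ := hγ
  set A : Matrix S S ℝ := 1 - γ • P with hA
  have hPle : ∀ s s', P s s' ≤ 1 := by
    intro s s'
    calc P s s' ≤ ∑ t, P s t := Finset.single_le_sum (fun t _ => hPnn s t) (Finset.mem_univ s')
    _ = 1 := hPsum s
  -- A is invertible (strictly diagonally dominant)
  have hdet : A.det ≠ 0 := by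
    apply det_ne_zero_of_sum_row_lt_diag
    intro k
    have h1 : ∀ j ∈ Finset.univ.erase k, ‖A k j‖ = γ * P k j := by
      intro j hj
      have hjk : j ≠ k := (Finset.mem_erase.mp hj).1
      simp [hA, Matrix.one_apply_ne (Ne.symm hjk), abs_of_nonneg hγ0.le,
        abs_of_nonneg (hPnn k j)]
    rw [Finset.sum_congr rfl h1]
    have hAkk : A k k = 1 - γ * P k k := by simp [hA]
    have hpos : 0 ≤ 1 - γ * P k k := by nlinarith [hPnn k k, hPle k k]
    rw [hAkk, Real.norm_eq_abs, abs_of_nonneg hpos, ← Finset.mul_sum]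
    have hsum : ∑ j ∈ Finset.univ.erase k, P k j = 1 - P k k := by
      rw [Finset.sum_erase_eq_sub (Finset.mem_univ k), hPsum k]
    rw [hsum]
    nlinarith [hPnn k k, hPle k k]
  have hunit : IsUnit A := A.isUnit_iff_isUnit_det.mpr (isUnit_iff_ne_zero.mpr hdet)
  have hAinv : A⁻¹ * A = 1 := Matrix.nonsing_inv_mul A (isUnit_iff_ne_zero.mpr hdet)
  have hAinv' : A * A⁻¹ = 1 := Matrix.mul_nonsing_inv A (isUnit_iff_ne_zero.mpr hdet)
  -- A applied to a constant vector
  have hAconst : ∀ c : ℝ, A *ᵥ (fun _ => c) = fun _ => (1 - γ) * c := by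
    intro c
    funext s
    have h2 : ((γ • P) *ᵥ fun _ => c) s = γ * c := by
      simp only [Matrix.mulVec, dotProduct, Matrix.smul_apply, smul_eq_mul]
      rw [← Finset.sum_mul, ← Finset.mul_sum, hPsum s, mul_one]
    simp only [hA, Matrix.sub_mulVec, Pi.sub_apply, Matrix.one_mulVec, h2]
    ring
  constructor
  · intro h
    set V : S → ℝ := A⁻¹ *ᵥ r with hV
    obtain ⟨s0⟩ := ‹Nonempty S›
    set c : ℝ := (P *ᵥ V) s0 with hc
    have hVconst : V = fun _ => c := by
      funext s'
      have := h s0 s'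
      linarith
    have hr : r = A *ᵥ V := by
      rw [hV, Matrix.mulVec_mulVec, hAinv', Matrix.one_mulVec]
    refine ⟨(1 - γ) * c, ?_⟩
    rw [hr, hVconst, hAconst]
  · rintro ⟨α, rfl⟩
    set β : ℝ := α / (1 - γ) with hβ
    have hAβ : A *ᵥ (fun _ => β) = fun _ => α := by
      rw [hAconst]
      funext s
      have h1γ : (1 - γ) ≠ 0 := by linarith
      rw [hβ, mul_div_cancel₀ _ h1γ]
    have hVconst : A⁻¹ *ᵥ (fun _ => α) = fun _ => β := by
      rw [← hAβ, Matrix.mulVec_mulVec, hAinv, Matrix.one_mulVec]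
    intro s s'
    rw [hVconst]
    simp only [Matrix.mulVec, dotProduct]
    rw [show ∑ t, P s t * β = β by rw [← Finset.sum_mul, hPsum s, one_mul]]
    ring
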